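/- Let R be an associative ring with involution *, let P be a prime ideal of R such that R/P has characteristic different from 2, and suppose * is of P-second kind (Z(R) ∩ S(R) is not contained in P). If d₁ and d₂ are derivations of R, then the following are equivalent: (1) the image of d₁(x)d₂(x*) − [x, x*] lies in Z(R/P) for all x ∈ R; (2) the image of d₁(x)d₂(x*) − x ∘ x* lies in Z(R/P) for all x ∈ R; (3) R/P is an integral domain. -/

import Mathlib

namespace Statement12Aux

variable {Q : Type*} [Ring Q]

/-- `c` is central in `Q`. -/
def Cent (c : Q) : Prop := ∀ T : Q, c * T = T * c

lemma Cent.add {a b : Q} (ha : Cent a) (hb : Cent b) : Cent (a + b) := by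
  intro T; rw [add_mul, mul_add, ha, hb]

lemma Cent.neg {a : Q} (ha : Cent a) : Cent (-a) := by
  intro T; rw [neg_mul, mul_neg, ha]

lemma Cent.sub {a b : Q} (ha : Cent a) (hb : Cent b) : Cent (a - b) := by
  intro T; rw [sub_mul, mul_sub, ha, hb]

lemma Cent.mul {a b : Q} (ha : Cent a) (hb : Cent b) : Cent (a * b) := by
  intro T; rw [mul_assoc, hb, ← mul_assoc, ha, mul_assoc]

lemma cent_zero : Cent (0 : Q) := by intro T; rw [zero_mul, mul_zero]

lemma cent_two : Cent (2 : Q) := by intro T; rw [two_mul, mul_two]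

lemma cent_congr {a b : Q} (h : Cent a) (e : a = b) : Cent b := e ▸ h

lemma Cent.of_neg {a : Q} (h : Cent (-a)) : Cent a := by
  have := h.neg; rwa [neg_neg] at this

lemma swapE {c : Q} (hc : Cent c) (X : Q) : X * c = c * X := (hc X).symm

lemma swapL {c : Q} (hc : Cent c) (X Y : Q) : X * (c * Y) = c * (X * Y) := by
  rw [← mul_assoc, ← hc X, mul_assoc]

/-- primality as a hypothesis -/
def PrimeQ (Q : Type*) [Ring Q] : Prop :=
  ∀ a b : Q, (∀ v : Q, a * v * b = 0) → a = 0 ∨ b = 0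

lemma cent_mul_eq_zero (hP : PrimeQ Q) {c g : Q} (hc : Cent c) (h : c * g = 0) :
    c = 0 ∨ g = 0 := by
  refine hP c g (fun v => ?_)
  rw [mul_assoc, ← swapL hc v g, h, mul_zero]

lemma cancel_left (hP : PrimeQ Q) {c g : Q} (hc : Cent c) (hc0 : c ≠ 0) (h : c * g = 0) :
    g = 0 := ((cent_mul_eq_zero hP hc h).resolve_left hc0)

lemma cancel_right (hP : PrimeQ Q) {c g : Q} (hc : Cent c) (hc0 : c ≠ 0) (h : g * c = 0) :
    g = 0 := by
  refine (hP g c (fun v => ?_)).resolve_right hc0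
  rw [mul_assoc, ← hc v, ← mul_assoc, h, zero_mul]

lemma two_cancel (hP : PrimeQ Q) (h2 : (2:Q) ≠ 0) {g : Q} (h : (2:Q) * g = 0) : g = 0 :=
  cancel_left hP cent_two h2 h

lemma cent_cancel (hP : PrimeQ Q) {c w : Q} (hc : Cent c) (hc0 : c ≠ 0)
    (h : Cent (c * w)) : Cent w := by
  intro T
  have h1 : c * (w * T - T * w) = 0 := by
    have e := h T
    rw [swapL hc T w] at e
    calc c * (w * T - T * w) = c * w * T - c * (T * w) := by noncomm_ring
      _ = 0 := by rw [e, sub_self]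
  exact sub_eq_zero.mp (cancel_left hP hc hc0 h1)

lemma cent_cancel_two (hP : PrimeQ Q) (h2 : (2:Q) ≠ 0) {w : Q}
    (h : Cent ((2:Q) * w)) : Cent w := cent_cancel hP cent_two h2 h

/-- all commutators central implies commutative -/
lemma lemmaA (hP : PrimeQ Q) (h2 : (2:Q) ≠ 0)
    (h : ∀ a b : Q, Cent (a * b - b * a)) : ∀ a b : Q, a * b = b * a := by
  intro x y
  have hc : Cent (x * y - y * x) := h x y
  set c := x * y - y * x with hcdef
  have hc2 : Cent (x * (y*y) - (y*y) * x) := h x (y*y)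
  have e1 : x * (y*y) - (y*y) * x = (2:Q) * (y * c) := by
    calc x * (y*y) - (y*y) * x = y * c + c * y := by rw [hcdef]; noncomm_ring
      _ = (2:Q) * (y * c) := by rw [hc y, two_mul]
  rw [e1] at hc2
  have e3 : ((2:Q)*(y*c))*x - x*((2:Q)*(y*c)) = 0 := by rw [hc2 x, sub_self]
  have e4 : ((2:Q)*(y*c))*x - x*((2:Q)*(y*c)) = -((2:Q)*(c*c)) := by
    calc ((2:Q)*(y*c))*x - x*((2:Q)*(y*c)) = (2:Q)*(y*(c*x) - x*(y*c)) := by noncomm_ring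
      _ = (2:Q)*(y*(x*c) - x*(y*c)) := by rw [hc x]
      _ = -((2:Q)*(c*c)) := by rw [hcdef]; noncomm_ring
  have e5 : (2:Q)*(c*c) = 0 := by
    have := e4 ▸ e3; rwa [neg_eq_zero] at this
  have hcc : c * c = 0 := two_cancel hP h2 e5
  have hc0 : c = 0 := by
    rcases hP c c (fun v => by rw [mul_assoc, ← swapL hc v c, hcc, mul_zero]) with h'|h' <;>
      exact h'
  exact sub_eq_zero.mp hc0


lemma cent4 {c0 c1 c2 c3 : Q} (h0 : Cent c0) (h1 : Cent c1) (h2 : Cent c2) (h3 : Cent c3)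
    (A B T : Q) :
    (c0 - c1 * A - c2 + c3 * B) * T - T * (c0 - c1 * A - c2 + c3 * B)
      = c3 * (B * T - T * B) - c1 * (A * T - T * A) := by
  have e0 := h0 T
  have e2 := h2 T
  have e1 := swapL h1 T A
  have e3 := swapL h3 T B
  calc (c0 - c1 * A - c2 + c3 * B) * T - T * (c0 - c1 * A - c2 + c3 * B)
      = (c0*T - T*c0) - (c2*T - T*c2) - (c1*(A*T) - T*(c1*A)) + (c3*(B*T) - T*(c3*B)) := by
        noncomm_ring
    _ = c3 * (B * T - T * B) - c1 * (A * T - T * A) := by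
        rw [e0, e1, e2, e3]; noncomm_ring

lemma centK2 {c0 c1 : Q} (h0 : Cent c0) (h1 : Cent c1) (X : Q) :
    (c0 - X * c1) * X = X * (c0 - X * c1) := by
  have e1 := swapE h1 X
  calc (c0 - X*c1)*X = c0*X - X*(c1*X) := by noncomm_ring
    _ = X*c0 - X*(X*c1) := by rw [← e1, h0 X]
    _ = X*(c0 - X*c1) := by noncomm_ring

variable {R : Type*} [Ring R]

/-- `λ(u,v) = α(u)β(v) - [u,v]` in the quotient. -/
def LL (π : R →+* Q) (α β : R → Q) (u v : R) : Q :=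
  α u * β v - (π u * π v - π v * π u)

theorem starCase (hP : PrimeQ Q) (h2 : (2:Q) ≠ 0)
    (π : R →+* Q) (hsurj : Function.Surjective π)
    (α β : R → Q)
    (hαa : ∀ x y : R, α (x+y) = α x + α y)
    (hβa : ∀ x y : R, β (x+y) = β x + β y)
    (hα : ∀ x y : R, α (x*y) = α x * π y + π x * α y)
    (hβ : ∀ x y : R, β (x*y) = β x * π y + π x * β y)
    (hc : ∀ u v : R, Cent (LL π α β u v)) :
    ∀ a b : Q, a * b = b * a := by
  by_cases hcm : ∀ a b : Q, a * b = b * a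
  · exact hcm
  exfalso
  push_neg at hcm
  obtain ⟨A, B, hAB⟩ := hcm
  obtain ⟨w₁, hw₁⟩ := hsurj A
  obtain ⟨w₂, hw₂⟩ := hsurj B
  have hW : π w₁ * π w₂ - π w₂ * π w₁ ≠ 0 := by
    rw [hw₁, hw₂]; exact sub_ne_zero.mpr hAB
  have hcL : ∀ u v : R, Cent (LL π α β u v) := hc
  -- exact identity M3
  have hM3 : ∀ u y v : R,
      (π u * π y - π y * π u) * π v - π v * (π u * π y - π y * π u)
        = LL π α β u (v*y) - LL π α β u v * π y - LL π α β (u*v) y + π u * LL π α β v y := by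
    intro u y v
    simp only [LL, hα, hβ, map_mul]
    noncomm_ring
  -- M7
  have hM7 : ∀ u y v t : R,
      ((π u * π y - π y * π u) * π v - π v * (π u * π y - π y * π u)) * π t
        - π t * ((π u * π y - π y * π u) * π v - π v * (π u * π y - π y * π u))
      = LL π α β v y * (π u * π t - π t * π u) - LL π α β u v * (π y * π t - π t * π y) := by
    intro u y v t
    rw [hM3 u y v, ← hcL v y (π u)]
    exact cent4 (hcL u _) (hcL u v) (hcL _ y) (hcL v y) (π y) (π u) (π t)
  -- M21
  have hM21 : ∀ v y u t : R,
      (LL π α β v y - LL π α β y v) * (π u * π t - π t * π u)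
        = (LL π α β y u - LL π α β u y) * (π v * π t - π t * π v) := by
    intro v y u t
    apply eq_of_sub_eq_zero
    have h1 := hM7 u y v t
    have h2' := hM7 u v y t
    have h3 := hM7 y v u t
    calc (LL π α β v y - LL π α β y v) * (π u * π t - π t * π u)
          - (LL π α β y u - LL π α β u y) * (π v * π t - π t * π v)
        = (LL π α β v y * (π u * π t - π t * π u) - LL π α β u v * (π y * π t - π t * π y))
          - (LL π α β y v * (π u * π t - π t * π u) - LL π α β u y * (π v * π t - π t * π v))
          + (LL π α β u v * (π y * π t - π t * π y) - LL π α β y u * (π v * π t - π t * π v)) := by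
          noncomm_ring
      _ = (((π u * π y - π y * π u) * π v - π v * (π u * π y - π y * π u)) * π t
            - π t * ((π u * π y - π y * π u) * π v - π v * (π u * π y - π y * π u)))
          - (((π u * π v - π v * π u) * π y - π y * (π u * π v - π v * π u)) * π t
            - π t * ((π u * π v - π v * π u) * π y - π y * (π u * π v - π v * π u)))
          + (((π y * π v - π v * π y) * π u - π u * (π y * π v - π v * π y)) * π t
            - π t * ((π y * π v - π v * π y) * π u - π u * (π y * π v - π v * π y))) := by
          rw [← h1, ← h2', ← h3]
      _ = 0 := by noncomm_ring
  -- M22 : symmetry of L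
  have hM22 : ∀ u v : R, LL π α β u v = LL π α β v u := by
    intro u v
    have hσ : Cent (LL π α β v u - LL π α β u v) := (hcL v u).sub (hcL u v)
    by_cases hcv : Cent (π v)
    · have h1 := hM21 v u w₁ w₂
      have hv0 : π v * π w₂ - π w₂ * π v = 0 := by rw [hcv (π w₂), sub_self]
      rw [hv0, mul_zero] at h1
      rcases cent_mul_eq_zero hP hσ h1 with h'|h'
      · exact (sub_eq_zero.mp h').symm
      · exact absurd h' hW
    · have hcv' : ∃ T : Q, ¬ π v * T = T * π v := by
        by_contra hh; push_neg at hh; exact hcv hh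
      obtain ⟨T, hT⟩ := hcv'
      obtain ⟨t, ht⟩ := hsurj T
      rw [← ht] at hT
      have hvt : π v * π t - π t * π v ≠ 0 := sub_ne_zero.mpr hT
      have h1 := hM21 u v v t
      rw [sub_self, zero_mul] at h1
      have hσ' : Cent (LL π α β u v - LL π α β v u) := (hcL u v).sub (hcL v u)
      exact sub_eq_zero.mp ((cent_mul_eq_zero hP hσ' h1).resolve_right hvt)
  -- exact identity M1'
  have hM1' : ∀ u v y : R, α u * π v * β y
      = (π u * π y - π y * π u) * π v + LL π α β (u*v) y - π u * LL π α β v y := by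
    intro u v y; simp only [LL, hα, map_mul]; noncomm_ring
  -- pRq lemma
  have hpRq : ∀ p q : Q, (∀ V : Q, Cent (p * V * q)) → p = 0 ∨ q = 0 := by
    intro p q hcv
    refine hP p q (fun V => ?_)
    by_contra hc0
    have hcc : Cent (p * V * q) := hcv V
    have h1 : ∀ T W : Q, (p*V*q) * ((T*(V*q))*W - W*(T*(V*q))) = 0 := by
      intro T W
      have e : (p*V*q) * (T*(V*q)) = p*(V*q*T*V)*q := by noncomm_ring
      have hcent2 : Cent ((p*V*q) * (T*(V*q))) := by rw [e]; exact hcv _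
      have e2 : W * ((p*V*q) * (T*(V*q))) = (p*V*q) * (W*(T*(V*q))) := swapL hcc W _
      calc (p*V*q) * ((T*(V*q))*W - W*(T*(V*q)))
          = ((p*V*q) * (T*(V*q)))*W - (p*V*q) * (W*(T*(V*q))) := by noncomm_ring
        _ = ((p*V*q) * (T*(V*q)))*W - W*((p*V*q) * (T*(V*q))) := by rw [e2]
        _ = 0 := by rw [hcent2 W, sub_self]
    have h2' : ∀ T W : Q, (T*(V*q))*W = W*(T*(V*q)) := fun T W =>
      sub_eq_zero.mp (cancel_left hP hcc hc0 (h1 T W))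
    have hg : Cent (V*q) := by
      intro W; have := h2' 1 W; simpa using this
    have h3 : ∀ T W : Q, (V*q) * (T*W - W*T) = 0 := by
      intro T W
      calc (V*q)*(T*W - W*T) = ((V*q)*T)*W - ((V*q)*(W*T)) := by noncomm_ring
        _ = (T*(V*q))*W - (W*T)*(V*q) := by rw [← swapE hg T, ← swapE hg (W*T)]
        _ = (T*(V*q))*W - W*(T*(V*q)) := by noncomm_ring
        _ = 0 := by rw [h2' T W, sub_self]
    rcases eq_or_ne (V*q) 0 with hvq|hvq
    · exact hc0 (by rw [mul_assoc, hvq, mul_zero])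
    · have hcomm : ∀ T W : Q, T*W = W*T := fun T W =>
        sub_eq_zero.mp (cancel_left hP hg hvq (h3 T W))
      exact hAB (hcomm A B)
  -- nontrivial β
  by_cases hβ0 : ∀ y : R, β y = 0
  · have hcc : ∀ a b : Q, Cent (a*b - b*a) := by
      intro a b
      obtain ⟨u, rfl⟩ := hsurj a; obtain ⟨v, rfl⟩ := hsurj b
      have e : LL π α β u v = -(π u * π v - π v * π u) := by
        simp only [LL]; rw [hβ0 v, mul_zero, zero_sub]
      exact (cent_congr (hcL u v) e).of_neg
    exact hAB (lemmaA hP h2 hcc A B)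
  push_neg at hβ0
  obtain ⟨y₀, hy₀⟩ := hβ0
  -- α vanishes on (P-)central elements
  have hα0 : ∀ x : R, Cent (π x) → α x = 0 := by
    intro x hx
    have hKey : ∀ V : Q, Cent (α x * V * β y₀) := by
      intro V; obtain ⟨v, rfl⟩ := hsurj V
      have e := hM1' x v y₀
      have hxy : π x * π y₀ - π y₀ * π x = 0 := by rw [hx (π y₀), sub_self]
      rw [hxy, zero_mul, zero_add] at e
      rw [e]
      exact (hcL _ _).sub (hx.mul (hcL _ _))
    exact (hpRq (α x) (β y₀) hKey).resolve_right hy₀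
  -- μ(x) = 0 for all x
  have hmu : ∀ x : R, LL π α β x x = 0 := by
    intro x
    have hLxx : LL π α β x x = α x * β x := by simp only [LL, sub_self, sub_zero]
    by_cases hx : Cent (π x)
    · rw [hLxx, hα0 x hx, zero_mul]
    · by_cases hq : β x = 0
      · rw [hLxx, hq, mul_zero]
      · have hK2 : ∀ V : Q, (α x * V * β x) * π x = π x * (α x * V * β x) := by
          intro V; obtain ⟨v, rfl⟩ := hsurj V
          have e := hM1' x v x
          rw [sub_self, zero_mul, zero_add] at e
          rw [e]
          exact centK2 (hcL _ _) (hcL _ _) (π x)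
        have h4 : ∀ V₁ : Q, (α x * V₁ * π x - π x * (α x * V₁)) * α x = 0 := by
          intro V₁
          refine (hP _ (β x) (fun V₂ => ?_)).resolve_right hq
          calc (α x * V₁ * π x - π x * (α x * V₁)) * α x * V₂ * β x
              = α x * V₁ * (π x * (α x * V₂ * β x))
                - π x * (α x * (V₁ * α x * V₂) * β x) := by noncomm_ring
            _ = α x * V₁ * ((α x * V₂ * β x) * π x)
                - (α x * (V₁ * α x * V₂) * β x) * π x := by
                  rw [← hK2 V₂, ← hK2 (V₁ * α x * V₂)]
            _ = 0 := by noncomm_ring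
        have hcmu : Cent (α x * β x) := by rw [← hLxx]; exact hcL x x
        by_cases hmu0 : α x * β x = 0
        · rw [hLxx]; exact hmu0
        · exfalso
          have h5 : ∀ V₁ : Q, α x * V₁ * π x - π x * (α x * V₁) = 0 := by
            intro V₁
            refine cancel_right hP hcmu hmu0 ?_
            calc (α x * V₁ * π x - π x * (α x * V₁)) * (α x * β x)
                = (α x * V₁ * π x - π x * (α x * V₁)) * α x * β x := by
                  rw [← mul_assoc _ (α x) (β x)]
              _ = 0 := by rw [h4 V₁, zero_mul]
          have h7 : ∀ T V : Q, α x * T * (V * π x - π x * V) = 0 := by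
            intro T V
            have e1 := h5 (T*V)
            have e2 := h5 T
            have e2' : π x * (α x * T) - α x * T * π x = 0 := by
              rw [← neg_sub, e2, neg_zero]
            calc α x * T * (V * π x - π x * V)
                = (α x * (T*V) * π x - π x * (α x * (T*V)))
                  + (π x * (α x * T) - α x * T * π x) * V := by noncomm_ring
              _ = 0 := by rw [e1, e2', zero_mul, add_zero]
          have h8 : ∀ V : Q, V * π x - π x * V = 0 := by
            intro V
            rcases hP (α x) _ (fun T => h7 T V) with h'|h'
            · exact absurd (by rw [h', zero_mul]) hmu0
            · exact h'
          exact hx (fun T => (sub_eq_zero.mp (h8 T)).symm)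
  -- polarization : L ≡ 0
  have hL0 : ∀ u v : R, LL π α β u v = 0 := by
    intro u v
    have epol : LL π α β (u+v) (u+v)
        = LL π α β u u + LL π α β v v + (LL π α β u v + LL π α β v u) := by
      simp only [LL, hαa, hβa, map_add]; noncomm_ring
    rw [hmu (u+v), hmu u, hmu v] at epol
    have h9 : LL π α β u v + LL π α β v u = 0 := by
      have := epol.symm; simpa using this
    have h10 := hM22 u v
    have h11 : (2:Q) * LL π α β u v = 0 := by
      rw [two_mul]; nth_rewrite 2 [h10]; exact h9
    exact two_cancel hP h2 h11
  -- conclude: all commutators central, hence commutative; contradiction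
  have hdc : ∀ a b : Q, Cent (a*b - b*a) := by
    intro a b
    obtain ⟨u, rfl⟩ := hsurj a; obtain ⟨y, rfl⟩ := hsurj b
    intro T; obtain ⟨v, rfl⟩ := hsurj T
    have e' : (π u * π y - π y * π u) * π v - π v * (π u * π y - π y * π u) = 0 := by
      rw [hM3 u y v]; simp only [hL0, zero_mul, mul_zero, sub_zero, zero_sub, add_zero,
        neg_zero, sub_self]
    exact sub_eq_zero.mp e'
  exact hAB (lemmaA hP h2 hdc A B)


theorem main_m {R : Type*} [Ring R] [StarRing R]
    (hP : PrimeQ Q) (h2 : (2:Q) ≠ 0)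
    (π : R →+* Q) (hsurj : Function.Surjective π)
    (α β : R → Q)
    (hαa : ∀ x y : R, α (x+y) = α x + α y)
    (hβa : ∀ x y : R, β (x+y) = β x + β y)
    (hα : ∀ x y : R, α (x*y) = α x * π y + π x * α y)
    (hβ : ∀ x y : R, β (x*y) = β x * π y + π x * β y)
    (s : R) (hscent : Cent (π s)) (hs0 : π s ≠ 0) (hss : star s = -s)
    (haa : Cent (β s)) (hbb : Cent (α s))
    (m : Q → Q → Q)
    (hml : ∀ a b c : Q, m (a+b) c = m a c + m b c)
    (hmr : ∀ a b c : Q, m a (b+c) = m a b + m a c)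
    (hmpl : ∀ (a b : Q), m (π s * a) b = π s * m a b)
    (hmpr : ∀ (a b : Q), m a (π s * b) = π s * m a b)
    (hFm : ∀ x : R, Cent (α x * β (star x) - m (π x) (π (star x))))
    (hfin1 : (∀ y z : R, Cent (α y * β z - m (π y) (π z))) → ∀ a b : Q, a * b = b * a)
    (hfin2 : (∀ y z : R, Cent (m (π y) (π z))) → ∀ a b : Q, a * b = b * a) :
    ∀ a b : Q, a * b = b * a := by
  by_cases hcm : ∀ a b : Q, a * b = b * a
  · exact hcm
  exfalso
  push_neg at hcm
  obtain ⟨A, B, hAB⟩ := hcm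
  -- m-helpers
  have hmnegr : ∀ a b : Q, m a (-b) = - m a b := by
    intro a b
    have h0 : m a 0 = 0 := by
      have h := hmr a 0 0; rw [add_zero] at h; exact right_eq_add.mp h
    have h := hmr a b (-b); rw [add_neg_cancel, h0] at h
    exact (neg_eq_of_add_eq_zero_right h.symm).symm
  -- additive helpers for β
  have hβneg : ∀ z : R, β (-z) = - β z := by
    intro z
    have h0 : β 0 = 0 := by
      have h := hβa 0 0; rw [add_zero] at h; exact right_eq_add.mp h
    have h := hβa z (-z); rw [add_neg_cancel, h0] at h
    exact (neg_eq_of_add_eq_zero_right h.symm).symm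
  -- star/s helpers
  have hπys : ∀ y : R, π (star (y*s)) = -(π s * π (star y)) := by
    intro y; rw [star_mul, hss, neg_mul, map_neg, map_mul]
  have hπys2 : ∀ y : R, π (y*s) = π s * π y := by
    intro y; rw [map_mul]; exact swapE hscent (π y)
  have hβys : ∀ y : R, β (star (y*s)) = -(β s * π (star y) + π s * β (star y)) := by
    intro y
    have e : star (y*s) = -(s * star y) := by rw [star_mul, hss, neg_mul]
    rw [e, hβneg, hβ s (star y)]
  have hαys : ∀ y : R, α (y*s) = π s * α y + α s * π y := by
    intro y; rw [hα y s, swapE hscent (α y), swapE hbb (π y)]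
  -- linearized hypothesis
  have hG : ∀ x y : R, Cent (α x * β (star y) + α y * β (star x)
      - m (π x) (π (star y)) - m (π y) (π (star x))) := by
    intro x y
    have h := hFm (x+y)
    have e : α (x+y) * β (star (x+y)) - m (π (x+y)) (π (star (x+y)))
        = (α x * β (star x) - m (π x) (π (star x)))
          + (α y * β (star y) - m (π y) (π (star y)))
          + (α x * β (star y) + α y * β (star x)
             - m (π x) (π (star y)) - m (π y) (π (star x))) := by
      rw [star_add, hαa, hβa, map_add, map_add, hml, hmr, hmr]
      noncomm_ring
    rw [e] at h
    exact cent_congr ((h.sub (hFm x)).sub (hFm y)) (by abel)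
  -- substitution y ↦ y*s : identity (III)
  have hIII : ∀ x y : R, Cent (2*(π s * (α y * β (star x))) - β s * (α x * π (star y))
      + α s * (π y * β (star x)) - 2*(π s * m (π y) (π (star x)))) := by
    intro x y
    have h1 := hG x (y*s)
    have h2' : Cent (π s * (α x * β (star y) + α y * β (star x)
        - m (π x) (π (star y)) - m (π y) (π (star x)))) := hscent.mul (hG x y)
    refine cent_congr (h1.add h2') ?_
    have e1 : α x * β (star (y*s)) + α (y*s) * β (star x)
          - m (π x) (π (star (y*s))) - m (π (y*s)) (π (star x))
        = α x * -(β s * π (star y) + π s * β (star y))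
          + (π s * α y + α s * π y) * β (star x)
          + π s * m (π x) (π (star y)) - π s * m (π y) (π (star x)) := by
      rw [hβys y, hαys y, hπys y, hπys2 y, hmnegr, hmpr, hmpl]; noncomm_ring
    rw [e1]
    calc α x * -(β s * π (star y) + π s * β (star y))
          + (π s * α y + α s * π y) * β (star x)
          + π s * m (π x) (π (star y)) - π s * m (π y) (π (star x))
        + π s * (α x * β (star y) + α y * β (star x)
          - m (π x) (π (star y)) - m (π y) (π (star x)))
        = -(α x * (β s * π (star y))) - α x * (π s * β (star y))
          + π s * (α y * β (star x)) + α s * (π y * β (star x))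
          + π s * m (π x) (π (star y)) - π s * m (π y) (π (star x))
          + (π s * (α x * β (star y)) + π s * (α y * β (star x))
             - π s * m (π x) (π (star y)) - π s * m (π y) (π (star x))) := by noncomm_ring
      _ = 2*(π s * (α y * β (star x))) - β s * (α x * π (star y))
          + α s * (π y * β (star x)) - 2*(π s * m (π y) (π (star x))) := by
          rw [swapL haa (α x) (π (star y)), swapL hscent (α x) (β (star y))]; noncomm_ring
  -- extract the two central families
  have hCX : ∀ x y : R, Cent (β s * (α x * π (star y)) + α s * (π y * β (star x))) := by
    intro x y
    have h1 := hIII x (y*s)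
    have h2' : Cent (π s * (2*(π s * (α y * β (star x))) - β s * (α x * π (star y))
        + α s * (π y * β (star x)) - 2*(π s * m (π y) (π (star x))))) :=
      hscent.mul (hIII x y)
    have hsum : Cent ((2:Q) * (β s * (π s * (α x * π (star y)))
        + α s * (π s * (π y * β (star x))))) := by
      refine cent_congr (h1.sub h2') ?_
      have e1 : 2*(π s * (α (y*s) * β (star x))) - β s * (α x * π (star (y*s)))
            + α s * (π (y*s) * β (star x)) - 2*(π s * m (π (y*s)) (π (star x)))
          = 2*(π s * ((π s * α y + α s * π y) * β (star x)))
            - β s * (α x * -(π s * π (star y)))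
            + α s * ((π s * π y) * β (star x))
            - 2*(π s * (π s * m (π y) (π (star x)))) := by
        rw [hαys y, hπys y, hπys2 y, hmpl]
      rw [e1]
      calc 2*(π s * ((π s * α y + α s * π y) * β (star x)))
            - β s * (α x * -(π s * π (star y)))
            + α s * ((π s * π y) * β (star x))
            - 2*(π s * (π s * m (π y) (π (star x))))
          - π s * (2*(π s * (α y * β (star x))) - β s * (α x * π (star y))
            + α s * (π y * β (star x)) - 2*(π s * m (π y) (π (star x))))
          = 2*(π s * (α s * (π y * β (star x)))) + β s * (α x * (π s * π (star y)))
            + α s * (π s * (π y * β (star x)))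
            + π s * (β s * (α x * π (star y)))
            - π s * (α s * (π y * β (star x))) := by noncomm_ring
        _ = (2:Q) * (β s * (π s * (α x * π (star y)))
            + α s * (π s * (π y * β (star x)))) := by
            rw [swapL hscent (α x) (π (star y)), swapL haa (π s) (α x * π (star y)),
              swapL hbb (π s) (π y * β (star x))]
            noncomm_ring
    have hsum2 : Cent (π s * (β s * (α x * π (star y)) + α s * (π y * β (star x)))) := by
      refine cent_congr (cent_cancel hP cent_two h2 hsum) ?_
      rw [← swapL haa (π s) (α x * π (star y)), ← swapL hbb (π s) (π y * β (star x)), mul_add]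
    exact cent_cancel hP hscent hs0 hsum2
  have hCY : ∀ x y : R, Cent (α s * (π y * β (star x)) - β s * (α x * π (star y))) := by
    intro x y
    have h1 := hCX x (y*s)
    refine cent_cancel hP hscent hs0 (cent_congr h1 ?_)
    calc β s * (α x * π (star (y*s))) + α s * (π (y*s) * β (star x))
        = β s * (α x * -(π s * π (star y))) + α s * ((π s * π y) * β (star x)) := by
          rw [hπys y, hπys2 y]
      _ = -(β s * (α x * (π s * π (star y)))) + α s * (π s * (π y * β (star x))) := by
          rw [mul_neg (α x), mul_neg (β s), mul_assoc (π s) (π y) (β (star x))]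
      _ = -(β s * (π s * (α x * π (star y)))) + α s * (π s * (π y * β (star x))) := by
          rw [swapL hscent (α x) (π (star y))]
      _ = π s * (α s * (π y * β (star x)) - β s * (α x * π (star y))) := by
          rw [← swapL haa (π s) (α x * π (star y)), ← swapL hbb (π s) (π y * β (star x))]
          noncomm_ring
  have hAA : ∀ x y : R, Cent (β s * (α x * π (star y))) := by
    intro x y
    have h := (hCX x y).sub (hCY x y)
    have e : β s * (α x * π (star y)) + α s * (π y * β (star x))
        - (α s * (π y * β (star x)) - β s * (α x * π (star y)))
        = (2:Q) * (β s * (α x * π (star y))) := by noncomm_ring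
    exact cent_cancel hP cent_two h2 (cent_congr h e)
  have hBB : ∀ x y : R, Cent (α s * (π y * β (star x))) := by
    intro x y
    have h := (hCX x y).add (hCY x y)
    have e : β s * (α x * π (star y)) + α s * (π y * β (star x))
        + (α s * (π y * β (star x)) - β s * (α x * π (star y)))
        = (2:Q) * (α s * (π y * β (star x))) := by noncomm_ring
    exact cent_cancel hP cent_two h2 (cent_congr h e)
  have hAA' : ∀ x z : R, Cent (β s * (α x * π z)) := by
    intro x z
    have := hAA x (star z)
    rwa [star_star] at this
  have hBB' : ∀ y z : R, Cent (α s * (π y * β z)) := by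
    intro y z
    have := hBB (star z) y
    rwa [star_star] at this
  -- LemmaB : matched m-centrality implies full m-centrality
  have hLB : (∀ x : R, Cent (m (π x) (π (star x)))) → ∀ y z : R, Cent (m (π y) (π z)) := by
    intro hmm y z
    have hlin : ∀ x y : R, Cent (m (π x) (π (star y)) + m (π y) (π (star x))) := by
      intro x y
      have h := hmm (x+y)
      have e : m (π (x+y)) (π (star (x+y)))
          = m (π x) (π (star x)) + m (π y) (π (star y))
            + (m (π x) (π (star y)) + m (π y) (π (star x))) := by
        rw [star_add, map_add, map_add, hml, hmr, hmr]; abel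
      rw [e] at h
      exact cent_congr ((h.sub (hmm x)).sub (hmm y)) (by abel)
    have hsub' : ∀ x y : R, Cent (m (π y) (π (star x)) - m (π x) (π (star y))) := by
      intro x y
      have h := hlin x (y*s)
      have e : m (π x) (π (star (y*s))) + m (π (y*s)) (π (star x))
          = π s * (m (π y) (π (star x)) - m (π x) (π (star y))) := by
        rw [hπys y, hπys2 y, hmnegr, hmpr, hmpl]; noncomm_ring
      exact cent_cancel hP hscent hs0 (cent_congr h e)
    have h2m : ∀ x y : R, Cent ((2:Q) * m (π y) (π (star x))) := by
      intro x y
      exact cent_congr ((hlin x y).add (hsub' x y)) (by noncomm_ring)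
    have h3 := cent_cancel hP cent_two h2 (h2m (star z) y)
    rwa [star_star] at h3
  -- case analysis on the central constants
  by_cases haa0 : β s = 0
  · by_cases hbb0 : α s = 0
    · -- Case 3
      have hD : ∀ x y : R, Cent (α y * β (star x) - m (π y) (π (star x))) := by
        intro x y
        have h := hIII x y
        have e : 2*(π s * (α y * β (star x))) - β s * (α x * π (star y))
            + α s * (π y * β (star x)) - 2*(π s * m (π y) (π (star x)))
            = (2:Q) * (π s * (α y * β (star x) - m (π y) (π (star x)))) := by
          rw [haa0, hbb0]; noncomm_ring
        exact cent_cancel hP hscent hs0 (cent_cancel hP cent_two h2 (cent_congr h e))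
      have hD' : ∀ y z : R, Cent (α y * β z - m (π y) (π z)) := by
        intro y z
        have := hD (star z) y
        rwa [star_star] at this
      exact hAB (hfin1 hD' A B)
    · -- Case 2 : α s ≠ 0
      have hVB : ∀ (z:R) (V:Q), Cent (V * β z) := by
        intro z V; obtain ⟨y, rfl⟩ := hsurj V
        exact cent_cancel hP hbb hbb0 (hBB' y z)
      have hβ00 : ∀ z : R, β z = 0 := by
        intro z
        have hBz : Cent (β z) := by have := hVB z 1; rwa [one_mul] at this
        have hzero : ∀ V T : Q, (V*T - T*V) * β z = 0 := by
          intro V T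
          have h' := hVB z V T
          have e1 : (V*β z)*T = (V*T)*β z := by rw [mul_assoc, hBz T, ← mul_assoc]
          have e2 : T*(V*β z) = (T*V)*β z := by rw [← mul_assoc]
          rw [e1, e2] at h'
          calc (V*T - T*V)*β z = (V*T)*β z - (T*V)*β z := by noncomm_ring
            _ = 0 := by rw [h', sub_self]
        have hmid : ∀ W : Q, (A*B - B*A) * W * β z = 0 := by
          intro W
          calc (A*B - B*A)*W*β z
              = (A*(B*W) - (B*W)*A)*β z + B*((W*A - A*W)*β z) := by noncomm_ring
            _ = 0 := by rw [hzero A (B*W), hzero W A, mul_zero, add_zero]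
        rcases hP (A*B - B*A) (β z) hmid with h'|h'
        · exact absurd (sub_eq_zero.mp h') hAB
        · exact h'
      have hm1 : ∀ x : R, Cent (m (π x) (π (star x))) := by
        intro x; have h := hFm x
        rw [hβ00 (star x), mul_zero, zero_sub] at h; exact h.of_neg
      exact hAB (hfin2 (hLB hm1) A B)
  · -- Case 1 : β s ≠ 0
    have hAV : ∀ (x:R) (V:Q), Cent (α x * V) := by
      intro x V; obtain ⟨v, rfl⟩ := hsurj V
      exact cent_cancel hP haa haa0 (hAA' x v)
    have hα00 : ∀ x : R, α x = 0 := by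
      intro x
      have hAx : Cent (α x) := by have := hAV x 1; rwa [mul_one] at this
      have hzero : ∀ V T : Q, α x * (V*T - T*V) = 0 := by
        intro V T
        have h' := hAV x V T
        rw [swapL hAx T V] at h'
        calc α x*(V*T - T*V) = (α x*V)*T - α x*(T*V) := by noncomm_ring
          _ = 0 := by rw [h', sub_self]
      have hmid : ∀ W : Q, α x * W * (A*B - B*A) = 0 := by
        intro W
        calc α x * W * (A*B - B*A)
            = α x * ((W*A)*B - B*(W*A)) + α x * (B*W - W*B) * A := by noncomm_ring
          _ = 0 := by rw [hzero (W*A) B, hzero B W, zero_mul, add_zero]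
      rcases hP (α x) (A*B - B*A) hmid with h'|h'
      · exact h'
      · exact absurd (sub_eq_zero.mp h') hAB
    have hm1 : ∀ x : R, Cent (m (π x) (π (star x))) := by
      intro x; have h := hFm x
      rw [hα00 x, zero_mul, zero_sub] at h; exact h.of_neg
    exact hAB (hfin2 (hLB hm1) A B)


end Statement12Aux

open Statement12Aux in
/-- Theorem 4.
Let `R` be a ring with involution `*`, `P` a prime ideal of `R` with `char (R/P) ≠ 2`
(equivalently, since `P` is proper, `(2 : R) ∉ P`), and suppose `*` is of `P`-second kind
(`Z(R) ∩ S(R) ⊄ P`).  If `d₁, d₂` are derivations of `R`, the following are equivalent: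
(1) the image of `d₁(x)d₂(x*) − [x, x*]` lies in `Z(R/P)` for all `x ∈ R`;
(2) the image of `d₁(x)d₂(x*) − x ∘ x*` lies in `Z(R/P)` for all `x ∈ R`;
(3) `R/P` is an integral domain.
(Formalized as (1) ↔ (3) and (2) ↔ (3).) -/
theorem statement12 {R : Type*} [Ring R] [StarRing R] (P : TwoSidedIdeal R)
    (hP_proper : (1 : R) ∉ P)
    (hP_prime : ∀ a b : R, (∀ r : R, a * r * b ∈ P) → a ∈ P ∨ b ∈ P)
    (hchar : (2 : R) ∉ P)
    (hsecond : ∃ s : R, (∀ r : R, s * r = r * s) ∧ star s = -s ∧ s ∉ P)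
    (d₁ d₂ : R → R)
    (hd₁_add : ∀ x y : R, d₁ (x + y) = d₁ x + d₁ y)
    (hd₁_mul : ∀ x y : R, d₁ (x * y) = d₁ x * y + x * d₁ y)
    (hd₂_add : ∀ x y : R, d₂ (x + y) = d₂ x + d₂ y)
    (hd₂_mul : ∀ x y : R, d₂ (x * y) = d₂ x * y + x * d₂ y) :
    ((∀ x r : R,
        (d₁ x * d₂ (star x) - (x * star x - star x * x)) * r
          - r * (d₁ x * d₂ (star x) - (x * star x - star x * x)) ∈ P)
      ↔ ((1 : R) ∉ P ∧ (∀ x y : R, x * y - y * x ∈ P) ∧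
          (∀ x y : R, x * y ∈ P → x ∈ P ∨ y ∈ P)))
    ∧
    ((∀ x r : R,
        (d₁ x * d₂ (star x) - (x * star x + star x * x)) * r
          - r * (d₁ x * d₂ (star x) - (x * star x + star x * x)) ∈ P)
      ↔ ((1 : R) ∉ P ∧ (∀ x y : R, x * y - y * x ∈ P) ∧
          (∀ x y : R, x * y ∈ P → x ∈ P ∨ y ∈ P))) := by
  classical
  obtain ⟨s, hs, hss, hsP⟩ := hsecond
  set π : R →+* P.ringCon.Quotient := P.ringCon.mk' with hπdef
  have hmem : ∀ x : R, x ∈ P ↔ π x = 0 := by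
    intro x
    rw [TwoSidedIdeal.mem_iff]
    exact ⟨fun h => (RingCon.eq _).mpr h, fun h => (RingCon.eq _).mp h⟩
  have hsurj : Function.Surjective π := fun q => ⟨q.out, Quotient.out_eq' q⟩
  have hprime : PrimeQ P.ringCon.Quotient := by
    intro a b h
    obtain ⟨x, rfl⟩ := hsurj a; obtain ⟨y, rfl⟩ := hsurj b
    have hxy := hP_prime x y (fun r => (hmem _).mpr
      (by rw [map_mul, map_mul]; exact h (π r)))
    rcases hxy with h'|h'
    · exact Or.inl ((hmem x).mp h')
    · exact Or.inr ((hmem y).mp h')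
  have hπ2 : π (2:R) = (2:P.ringCon.Quotient) := by
    rw [show (2:R) = 1+1 by norm_num, map_add, map_one]; norm_num
  have h2 : (2 : P.ringCon.Quotient) ≠ 0 := by
    intro h
    exact hchar ((hmem 2).mpr (hπ2.trans h))
  have hscent : Cent (π s) := by
    intro T; obtain ⟨r, rfl⟩ := hsurj T
    rw [← map_mul, ← map_mul, hs r]
  have hs0 : π s ≠ 0 := fun h => hsP ((hmem s).mpr h)
  -- derivation images
  have hdc : ∀ (d : R → R), (∀ x y : R, d (x*y) = d x * y + x * d y) → Cent (π (d s)) := by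
    intro d hdm
    have hR : ∀ r : R, d s * r = r * d s := by
      intro r
      have h1 := hdm s r
      have h2' := hdm r s
      have h3 : d s * r + s * d r = d r * s + r * d s := by
        rw [← h1, ← h2', hs r]
      rw [hs (d r), add_comm (d r * s) (r * d s)] at h3
      exact add_right_cancel h3
    intro T; obtain ⟨r, rfl⟩ := hsurj T
    rw [← map_mul, ← map_mul, hR r]
  have haa : Cent (π (d₂ s)) := hdc d₂ hd₂_mul
  have hbb : Cent (π (d₁ s)) := hdc d₁ hd₁_mul
  have hαa : ∀ x y : R, π (d₁ (x+y)) = π (d₁ x) + π (d₁ y) := by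
    intro x y; rw [hd₁_add, map_add]
  have hβa : ∀ x y : R, π (d₂ (x+y)) = π (d₂ x) + π (d₂ y) := by
    intro x y; rw [hd₂_add, map_add]
  have hα : ∀ x y : R, π (d₁ (x*y)) = π (d₁ x) * π y + π x * π (d₁ y) := by
    intro x y; rw [hd₁_mul, map_add, map_mul, map_mul]
  have hβ : ∀ x y : R, π (d₂ (x*y)) = π (d₂ x) * π y + π x * π (d₂ y) := by
    intro x y; rw [hd₂_mul, map_add, map_mul, map_mul]
  -- commutativity gives everything
  have hcomm_of : (∀ a b : P.ringCon.Quotient, a*b = b*a) → (∀ x y : R, x*y - y*x ∈ P) := by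
    intro h x y
    refine (hmem _).mpr ?_
    rw [map_sub, map_mul, map_mul, h (π x) (π y), sub_self]
  have htriple : (∀ x y : R, x*y - y*x ∈ P) →
      ((1:R) ∉ P ∧ (∀ x y : R, x * y - y * x ∈ P) ∧
        (∀ x y : R, x * y ∈ P → x ∈ P ∨ y ∈ P)) := by
    intro hc
    refine ⟨hP_proper, hc, fun x y hxy => ?_⟩
    refine hP_prime x y (fun r => ?_)
    have e : x*r*y = r*(x*y) + (x*r - r*x)*y := by noncomm_ring
    rw [e]
    exact P.add_mem (P.mul_mem_left r _ hxy) (P.mul_mem_right _ y (hc x r))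
  -- Lie version
  have keyL : (∀ x r : R,
      (d₁ x * d₂ (star x) - (x * star x - star x * x)) * r
        - r * (d₁ x * d₂ (star x) - (x * star x - star x * x)) ∈ P) →
      ∀ a b : P.ringCon.Quotient, a*b = b*a := by
    intro h1
    refine main_m hprime h2 π hsurj (fun x => π (d₁ x)) (fun x => π (d₂ x))
      hαa hβa hα hβ s hscent hs0 hss haa hbb
      (fun a b => a*b - b*a)
      (fun a b c => by noncomm_ring) (fun a b c => by noncomm_ring)
      (fun a b => by
        show (π s * a) * b - b * (π s * a) = π s * (a * b - b * a)
        rw [swapL hscent b a]; noncomm_ring)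
      (fun a b => by
        show a * (π s * b) - (π s * b) * a = π s * (a * b - b * a)
        rw [swapL hscent a b]; noncomm_ring)
      ?_ ?_ ?_
    · -- hFm
      intro x T
      obtain ⟨r, rfl⟩ := hsurj T
      have h' := (hmem _).mp (h1 x r)
      rw [map_sub, map_mul, map_sub, map_mul, map_sub, map_mul, map_mul] at h'
      exact sub_eq_zero.mp h'
    · -- hfin1 : starCase
      intro hh
      exact starCase hprime h2 π hsurj _ _ hαa hβa hα hβ (fun u v => hh u v)
    · -- hfin2 : lemmaA
      intro hh
      refine lemmaA hprime h2 (fun a b => ?_)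
      obtain ⟨y, rfl⟩ := hsurj a; obtain ⟨z, rfl⟩ := hsurj b
      exact hh y z
  -- Jordan version
  have hd21 : π (d₂ (1:R)) = 0 := by
    have h := hd₂_mul 1 1
    simp only [one_mul, mul_one] at h
    have h' : d₂ 1 = 0 := right_eq_add.mp h
    rw [h', map_zero]
  have keyJ : (∀ x r : R,
      (d₁ x * d₂ (star x) - (x * star x + star x * x)) * r
        - r * (d₁ x * d₂ (star x) - (x * star x + star x * x)) ∈ P) →
      ∀ a b : P.ringCon.Quotient, a*b = b*a := by
    intro h1
    refine main_m hprime h2 π hsurj (fun x => π (d₁ x)) (fun x => π (d₂ x))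
      hαa hβa hα hβ s hscent hs0 hss haa hbb
      (fun a b => a*b + b*a)
      (fun a b c => by noncomm_ring) (fun a b c => by noncomm_ring)
      (fun a b => by
        show (π s * a) * b + b * (π s * a) = π s * (a * b + b * a)
        rw [swapL hscent b a]; noncomm_ring)
      (fun a b => by
        show a * (π s * b) + (π s * b) * a = π s * (a * b + b * a)
        rw [swapL hscent a b]; noncomm_ring)
      ?_ ?_ ?_
    · -- hFm
      intro x T
      obtain ⟨r, rfl⟩ := hsurj T
      have h' := (hmem _).mp (h1 x r)
      rw [map_sub, map_mul, map_sub, map_mul, map_add, map_mul, map_mul] at h'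
      exact sub_eq_zero.mp h'
    · -- hfin1
      intro hh
      have hcy : ∀ y : R, Cent (π y) := by
        intro y
        have h := hh y 1
        have e : π (d₁ y) * π (d₂ (1:R)) - (π y * π (1:R) + π (1:R) * π y)
            = -((2:P.ringCon.Quotient) * π y) := by
          rw [hd21, map_one]; noncomm_ring
        exact cent_cancel hprime cent_two h2 ((cent_congr h e).of_neg)
      intro a b; obtain ⟨y, rfl⟩ := hsurj a
      exact hcy y b
    · -- hfin2
      intro hh
      have hcy : ∀ y : R, Cent (π y) := by
        intro y
        have h := hh y 1
        have e : π y * π (1:R) + π (1:R) * π y = (2:P.ringCon.Quotient) * π y := by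
          rw [map_one]; noncomm_ring
        exact cent_cancel hprime cent_two h2 (cent_congr h e)
      intro a b; obtain ⟨y, rfl⟩ := hsurj a
      exact hcy y b
  constructor
  · constructor
    · intro h1; exact htriple (hcomm_of (keyL h1))
    · rintro ⟨-, hc, -⟩
      intro x r; exact hc _ r
  · constructor
    · intro h1; exact htriple (hcomm_of (keyJ h1))
    · rintro ⟨-, hc, -⟩
      intro x r; exact hc _ r
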